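/- arXiv:1912.03919 — 7 statements merged into one kernel-verified Lean document; each statement's English description precedes it below -/
import Mathlib

section
/- Let k ≥ 2 be an integer, let G be a finite connected simple graph, and let K̄_{k+1} denote the edgeless graph on k+1 vertices. Then γ_{[1,k]}(G ∘ K̄_{k+1}) = (k+1)·|V(G)| (i.e., the only [1,k]-dominating set of G ∘ K̄_{k+1} is its entire vertex set) if and only if G has no total [1,k]-dominating set. -/
/-- `D` is a `[1,k]`-dominating set of `G`: every vertex outside `D` is adjacent to
at least one and at most `k` vertices of `D`. -/
def IsOneKDom {V : Type*} (G : SimpleGraph V) (k : ℕ) (D : Set V) : Prop :=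
  ∀ v ∉ D, 1 ≤ {u ∈ D | G.Adj v u}.ncard ∧ {u ∈ D | G.Adj v u}.ncard ≤ k

/-- `D` is a total `[1,k]`-dominating set of `G`: every vertex is adjacent to
at least one and at most `k` vertices of `D`. -/
def IsTotalOneKDom {V : Type*} (G : SimpleGraph V) (k : ℕ) (D : Set V) : Prop :=
  ∀ v : V, 1 ≤ {u ∈ D | G.Adj v u}.ncard ∧ {u ∈ D | G.Adj v u}.ncard ≤ k

/-- The `[1,k]`-domination number: minimum cardinality of a `[1,k]`-dominating set. -/
noncomputable def oneKDomNum {V : Type*} [Fintype V] (G : SimpleGraph V) (k : ℕ) : ℕ :=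
  sInf {m | ∃ D : Set V, IsOneKDom G k D ∧ D.ncard = m}

/-- The total `[1,k]`-domination number: minimum cardinality of a total
`[1,k]`-dominating set. -/
noncomputable def totalOneKDomNum {V : Type*} [Fintype V] (G : SimpleGraph V) (k : ℕ) : ℕ :=
  sInf {m | ∃ D : Set V, IsTotalOneKDom G k D ∧ D.ncard = m}

/-- The lexicographic product `G ∘ H`. -/
def lexProd {α β : Type*} (G : SimpleGraph α) (H : SimpleGraph β) :
    SimpleGraph (α × β) where
  Adj a b := G.Adj a.1 b.1 ∨ (a.1 = b.1 ∧ H.Adj a.2 b.2)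
  symm := by
    constructor
    rintro ⟨g, h⟩ ⟨g', h'⟩ (hadj | ⟨rfl, hadj⟩)
    · exact Or.inl hadj.symm
    · exact Or.inr ⟨rfl, hadj.symm⟩
  loopless := by
    constructor
    rintro ⟨g, h⟩ (hadj | ⟨-, hadj⟩)
    · exact G.irrefl hadj
    · exact H.irrefl hadj

lemma lexProd_bot_nbhd {α : Type*} (G : SimpleGraph α) (k : ℕ)
    (D : Set (α × Fin (k + 1))) (v : α) (i : Fin (k + 1)) :
    {u ∈ D | (lexProd G (⊥ : SimpleGraph (Fin (k + 1)))).Adj (v, i) u} =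
      {p ∈ D | G.Adj v p.1} := by
  ext ⟨w, j⟩
  simp [lexProd]

lemma key_univ {α : Type*} [Fintype α] {k : ℕ} (hk : 2 ≤ k)
    {G : SimpleGraph α} (hGconn : G.Connected)
    (hno : ¬ ∃ D : Set α, IsTotalOneKDom G k D)
    (D : Set (α × Fin (k + 1)))
    (hD : IsOneKDom (lexProd G (⊥ : SimpleGraph (Fin (k + 1)))) k D) :
    D = Set.univ := by
  classical
  -- Full columns propagate along edges
  have hfull : ∀ v u : α, G.Adj v u → (∀ j, (v, j) ∈ D) → (∀ j, (u, j) ∈ D) := by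
    intro v u hadj hv
    by_contra h
    push_neg at h
    obtain ⟨j, hj⟩ := h
    have h2 := (hD (u, j) hj).2
    rw [lexProd_bot_nbhd] at h2
    have hle : (Set.univ : Set (Fin (k + 1))).ncard ≤ {p ∈ D | G.Adj u p.1}.ncard := by
      apply Set.ncard_le_ncard_of_injOn (fun i => (v, i))
      · intro i _
        exact ⟨hv i, hadj.symm⟩
      · intro a _ b _ hab
        simpa using hab
    rw [Set.ncard_univ, Nat.card_eq_fintype_card, Fintype.card_fin] at hle
    omega
  by_cases hex : ∃ v : α, ∀ j, (v, j) ∈ D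
  · -- some full column: everything full by connectivity
    obtain ⟨v, hv⟩ := hex
    ext ⟨u, j⟩
    simp only [Set.mem_univ, iff_true]
    have hreach := (hGconn.preconnected v u)
    obtain ⟨w⟩ := hreach
    have : ∀ j, (u, j) ∈ D := by
      induction w with
      | nil => exact hv
      | cons h p ih => exact ih (hfull _ _ h hv)
    exact this j
  · -- no full column: build a total [1,k]-dominating set, contradiction
    exfalso
    push_neg at hex
    apply hno
    refine ⟨{u | ∃ j, (u, j) ∈ D}, fun v => ?_⟩
    obtain ⟨i, hi⟩ := hex v
    have hv := hD (v, i) hi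
    rw [lexProd_bot_nbhd] at hv
    constructor
    · -- lower bound
      have hne : {p ∈ D | G.Adj v p.1}.Nonempty :=
        Set.nonempty_of_ncard_ne_zero (by omega)
      obtain ⟨⟨w, j⟩, hwD, hwadj⟩ := hne
      have : w ∈ {u ∈ {u | ∃ j, (u, j) ∈ D} | G.Adj v u} := ⟨⟨j, hwD⟩, hwadj⟩
      have := (Set.ncard_pos (Set.toFinite _)).mpr ⟨w, this⟩
      omega
    · -- upper bound
      have hle : {u ∈ {u | ∃ j, (u, j) ∈ D} | G.Adj v u}.ncard ≤
          {p ∈ D | G.Adj v p.1}.ncard := by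
        apply Set.ncard_le_ncard_of_injOn
          (fun u => (u, if h : ∃ j, (u, j) ∈ D then h.choose else 0))
        · rintro u ⟨⟨j, hj⟩, hadj⟩
          refine ⟨?_, hadj⟩
          rw [dif_pos (⟨j, hj⟩ : ∃ j, (u, j) ∈ D)]
          exact (⟨j, hj⟩ : ∃ j, (u, j) ∈ D).choose_spec
        · intro a _ b _ hab
          simpa using congrArg Prod.fst hab
      omega

/-- Corollary: for a finite connected graph `G` and `k ≥ 2`,
`γ_[1,k](G ∘ K̄_(k+1)) = (k+1)⬝|V(G)|` (equivalently, the only `[1,k]`-dominating set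
of `G ∘ K̄_(k+1)` is its whole vertex set) if and only if `G` has no total
`[1,k]`-dominating set. -/
theorem lexProd_bot_oneKDomNum_eq_iff
    {α : Type*} [Fintype α] (k : ℕ) (hk : 2 ≤ k)
    (G : SimpleGraph α) (hGconn : G.Connected) :
    (oneKDomNum (lexProd G (⊥ : SimpleGraph (Fin (k + 1)))) k = (k + 1) * Fintype.card α ∧
      (∀ D : Set (α × Fin (k + 1)),
        IsOneKDom (lexProd G (⊥ : SimpleGraph (Fin (k + 1)))) k D → D = Set.univ)) ↔
      ¬ ∃ D : Set α, IsTotalOneKDom G k D := by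
  constructor
  · rintro ⟨-, huniv⟩ ⟨T, hT⟩
    -- build D = T × {0}
    set D : Set (α × Fin (k + 1)) := {p | p.1 ∈ T ∧ p.2 = 0} with hDdef
    have hDdom : IsOneKDom (lexProd G (⊥ : SimpleGraph (Fin (k + 1)))) k D := by
      rintro ⟨v, i⟩ _
      rw [lexProd_bot_nbhd]
      have heq : {p ∈ D | G.Adj v p.1} =
          (fun u => (u, (0 : Fin (k + 1)))) '' {u ∈ T | G.Adj v u} := by
        ext ⟨w, j⟩
        constructor
        · rintro ⟨⟨hw, hj⟩, hadj⟩
          exact ⟨w, ⟨hw, hadj⟩, by simp [hj.symm]⟩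
        · rintro ⟨u, ⟨hu, hadj⟩, huw⟩
          obtain ⟨rfl, rfl⟩ := Prod.mk.injEq .. ▸ huw
          exact ⟨⟨hu, rfl⟩, hadj⟩
      rw [heq, Set.ncard_image_of_injective _ (fun a b hab => by simpa using hab)]
      exact hT v
    have := huniv D hDdom
    -- but (v, 1) ∉ D for v : α
    obtain ⟨v⟩ := hGconn.nonempty
    have h1 : ((v, (1 : Fin (k + 1))) : α × Fin (k + 1)) ∈ D := this ▸ Set.mem_univ _
    have h2 : (1 : Fin (k + 1)).val = (0 : Fin (k + 1)).val := congrArg Fin.val h1.2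
    rw [Fin.val_one', Fin.val_zero, Nat.mod_eq_of_lt (by omega)] at h2
    omega
  · intro hno
    have huniv := key_univ hk hGconn hno
    refine ⟨?_, huniv⟩
    have hcard : (Set.univ : Set (α × Fin (k + 1))).ncard = (k + 1) * Fintype.card α := by
      rw [Set.ncard_univ, Nat.card_eq_fintype_card, Fintype.card_prod, Fintype.card_fin,
        Nat.mul_comm]
    have hset : {m | ∃ D : Set (α × Fin (k + 1)),
        IsOneKDom (lexProd G (⊥ : SimpleGraph (Fin (k + 1)))) k D ∧ D.ncard = m} =
        {(k + 1) * Fintype.card α} := by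
      ext m
      simp only [Set.mem_setOf_eq, Set.mem_singleton_iff]
      constructor
      · rintro ⟨D, hD, rfl⟩
        rw [huniv D hD, hcard]
      · rintro rfl
        exact ⟨Set.univ, fun v hv => absurd (Set.mem_univ v) hv, hcard⟩
    rw [oneKDomNum, hset, csInf_singleton]
end

section
/- Let k ≥ 2, let X = {x_1,…,x_n} be a finite set, and let C = {C_1,…,C_t} be a collection of 3-element subsets of X. If the gadget graph G_{X,C} has a total [1,k]-dominating set, then there exists a subcollection C' ⊆ C such that every element of X belongs to at least one and at most k members of C'. -/
/-- Vertices of the gadget graph `G_{X,C}`: the elements `x i` of `X`, one vertex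
`c j` per set `C j`, and for each `j` the vertices `p j j'` and leaves `l j j'`. -/
inductive GadgetV (n t k : ℕ) : Type
  | x : Fin n → GadgetV n t k
  | c : Fin t → GadgetV n t k
  | p : Fin t → Fin k → GadgetV n t k
  | l : Fin t → Fin k → GadgetV n t k
  deriving DecidableEq

/-- The gadget graph `G_{X,C}`: edges `c j — p j j'`, `p j j' — l j j'`, and
`x i — c j` whenever `x i ∈ C j`. -/
def gadgetGraph (n t k : ℕ) (C : Fin t → Finset (Fin n)) :
    SimpleGraph (GadgetV n t k) :=
  SimpleGraph.fromRel (fun a b =>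
    match a, b with
    | .c j, .p j' _ => j = j'
    | .p j i, .l j' i' => j = j' ∧ i = i'
    | .x i, .c j => i ∈ C j
    | _, _ => False)

/-- If the gadget graph `G_{X,C}` has a total `[1,k]`-dominating set, then there is a
subcollection `C' ⊆ C` covering every element of `X` at least once and at most `k`
times. -/
theorem gadgetGraph_totalOneKDom_to_cover
    {n t k : ℕ} (hk : 2 ≤ k) (C : Fin t → Finset (Fin n))
    (hC3 : ∀ j, (C j).card = 3)
    (hD : ∃ D : Set (GadgetV n t k), IsTotalOneKDom (gadgetGraph n t k C) k D) :
    ∃ C' : Finset (Fin t), ∀ i : Fin n,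
      1 ≤ (C'.filter (fun j => i ∈ C j)).card ∧ (C'.filter (fun j => i ∈ C j)).card ≤ k := by
  classical
  obtain ⟨D, hD⟩ := hD
  set C' : Finset (Fin t) := Finset.univ.filter (fun j => GadgetV.c j ∈ D) with hC'
  refine ⟨C', fun i => ?_⟩
  have hadjx : ∀ u, (gadgetGraph n t k C).Adj (GadgetV.x i) u ↔
      ∃ j, u = GadgetV.c j ∧ i ∈ C j := by
    intro u
    rw [gadgetGraph, SimpleGraph.fromRel_adj]
    cases u <;> simp_all
  have key : {u ∈ D | (gadgetGraph n t k C).Adj (GadgetV.x i) u} =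
      ((C'.filter (fun j => i ∈ C j)).image GadgetV.c : Finset (GadgetV n t k)) := by
    ext u
    simp only [Set.mem_setOf_eq, Finset.coe_image, Set.mem_image, Finset.mem_coe,
      Finset.mem_filter, hC', Finset.mem_univ, true_and, hadjx]
    constructor
    · rintro ⟨hu, j, rfl, hij⟩
      exact ⟨j, ⟨hu, hij⟩, rfl⟩
    · rintro ⟨j, ⟨hu, hij⟩, rfl⟩
      exact ⟨hu, j, rfl, hij⟩
  have hinj : Function.Injective (GadgetV.c : Fin t → GadgetV n t k) := by
    intro a b h; cases h; rfl
  have hcard : {u ∈ D | (gadgetGraph n t k C).Adj (GadgetV.x i) u}.ncard =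
      (C'.filter (fun j => i ∈ C j)).card := by
    rw [key, Set.ncard_coe_finset, Finset.card_image_of_injective _ hinj]
  have := hD (GadgetV.x i)
  rw [hcard] at this
  exact this
end

section
/- The star-like tree S(2,2,2) on 7 vertices, consisting of a central vertex with three paths of length 2 attached (i.e., the spider with three legs of length 2), has no total [1,2]-dominating set. -/
/-- The star-like tree `S(2,…,2)` with `m` legs of length 2: the central vertex is
`none`, the support vertices are `some (i, 0)` (adjacent to the centre) and the
leaves are `some (i, 1)` (adjacent to `some (i, 0)`). -/
def spider (m : ℕ) : SimpleGraph (Option (Fin m × Fin 2)) :=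
  SimpleGraph.fromRel (fun a b =>
    match a, b with
    | none, some (_, j) => j = 0
    | some (i, j), some (i', j') => i = i' ∧ j = 0 ∧ j' = 1
    | _, _ => False)

lemma spider_leaf_adj {i : Fin 3} {u : Option (Fin 3 × Fin 2)}
    (h : (spider 3).Adj (some (i, 1)) u) : u = some (i, 0) := by
  rcases u with _ | ⟨i', j'⟩
  · simp [spider, SimpleGraph.fromRel_adj] at h
  · simp only [spider, SimpleGraph.fromRel_adj] at h
    obtain ⟨hne, ⟨rfl, h0, -⟩ | ⟨rfl, rfl, -⟩⟩ := h
    · exact absurd h0 (by decide)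
    · rfl

lemma spider_center_adj (i : Fin 3) : (spider 3).Adj none (some (i, 0)) := by
  simp [spider, SimpleGraph.fromRel_adj]

/-- The star-like tree `S(2,2,2)` on 7 vertices has no total `[1,2]`-dominating
set. -/
theorem spider_three_no_totalOneKDom :
    ¬ ∃ D : Set (Option (Fin 3 × Fin 2)), IsTotalOneKDom (spider 3) 2 D := by
  rintro ⟨D, hD⟩
  have key : ∀ i : Fin 3, (some (i, 0) : Option (Fin 3 × Fin 2)) ∈ D := by
    intro i
    have h1 := (hD (some (i, 1))).1
    have hne : {u ∈ D | (spider 3).Adj (some (i, 1)) u}.Nonempty :=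
      Set.nonempty_of_ncard_ne_zero (by omega)
    obtain ⟨u, huD, hadj⟩ := hne
    rwa [spider_leaf_adj hadj] at huD
  set S := {u ∈ D | (spider 3).Adj none u} with hS
  have hsub : ({some (0, 0), some (1, 0), some (2, 0)} :
      Set (Option (Fin 3 × Fin 2))) ⊆ S := by
    rintro u (rfl | rfl | rfl) <;> exact ⟨key _, spider_center_adj _⟩
  have htriple : ({some (0, 0), some (1, 0), some (2, 0)} :
      Set (Option (Fin 3 × Fin 2))).ncard = 3 :=
    Set.ncard_eq_three.mpr ⟨_, _, _, by decide, by decide, by decide, rfl⟩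
  have h3 : 3 ≤ S.ncard := by
    have := Set.ncard_le_ncard hsub S.toFinite; omega
  have h2 : S.ncard ≤ 2 := (hD none).2
  omega
end

section
/- For every integer k ≥ 2, the star-like tree S(2,2,…,2) on 2k+3 vertices, consisting of a central vertex with k+1 paths of length 2 attached, has no total [1,k]-dominating set. -/
/-- For every `k ≥ 2`, the star-like tree `S(2,…,2)` on `2k+3` vertices (a central
vertex with `k+1` paths of length 2 attached) has no total `[1,k]`-dominating set. -/
theorem spider_no_totalOneKDom (k : ℕ) (hk : 2 ≤ k) :
    ¬ ∃ D : Set (Option (Fin (k + 1) × Fin 2)), IsTotalOneKDom (spider (k + 1)) k D := by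
  rintro ⟨D, hD⟩
  -- Every support vertex `some (i,0)` is in `D`, since it is the unique
  -- neighbour of the leaf `some (i,1)`.
  have hsupp : ∀ i : Fin (k + 1), some (i, (0 : Fin 2)) ∈ D := by
    intro i
    have h1 := (hD (some (i, (1 : Fin 2)))).1
    obtain ⟨u, huD, hadj⟩ := Set.nonempty_of_ncard_ne_zero
      (by omega : {u ∈ D | (spider (k+1)).Adj (some (i, (1 : Fin 2))) u}.ncard ≠ 0)
    obtain ⟨hne, h | h⟩ := hadj
    · rcases u with _ | ⟨i', j'⟩
      · exact h.elim
      · exact absurd h.2.1 (by decide)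
    · rcases u with _ | ⟨i', j'⟩
      · exact absurd (show (1 : Fin 2) = 0 from h) (by decide)
      · obtain ⟨rfl, rfl, -⟩ := h
        exact huD
  -- The centre has all `k+1` support vertices as neighbours in `D`.
  have hsub : (fun i : Fin (k+1) => (some (i, (0:Fin 2)) : Option (Fin (k+1) × Fin 2))) ''
      Set.univ ⊆ {u ∈ D | (spider (k+1)).Adj none u} := by
    rintro _ ⟨i, -, rfl⟩
    exact ⟨hsupp i, fun h => Option.some_ne_none _ h.symm, Or.inl rfl⟩
  have hinj : Function.Injective
      (fun i : Fin (k+1) => (some (i, (0:Fin 2)) : Option (Fin (k+1) × Fin 2))) := by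
    intro a b h
    simpa using h
  have hcard : ((fun i : Fin (k+1) => (some (i, (0:Fin 2)) : Option (Fin (k+1) × Fin 2))) ''
      Set.univ).ncard = k + 1 := by
    rw [Set.ncard_image_of_injective _ hinj, Set.ncard_univ]
    simp
  have hle := Set.ncard_le_ncard hsub (Set.toFinite _)
  have := (hD none).2
  omega
end

section
/- Let k ≥ 1, let G be a finite simple graph, let K̄_{k+1} be the edgeless graph on k+1 vertices, and let D be a [1,k]-dominating set of the lexicographic product G ∘ K̄_{k+1}. If D contains the entire H-layer H^g = {(g,h) : h ∈ V(K̄_{k+1})} over some vertex g of G, then for every neighbor g' of g in G, D also contains the entire H-layer H^{g'}. -/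
/-- If a `[1,k]`-dominating set `D` of `G ∘ K̄_(k+1)` contains the whole layer over a
vertex `g`, then it contains the whole layer over every neighbour of `g`. -/
theorem layer_subset_of_adj
    {α : Type*} [Fintype α] (k : ℕ) (hk : 1 ≤ k) (G : SimpleGraph α)
    (D : Set (α × Fin (k + 1)))
    (hD : IsOneKDom (lexProd G (⊥ : SimpleGraph (Fin (k + 1)))) k D)
    (g : α) (hg : ∀ h : Fin (k + 1), (g, h) ∈ D)
    (g' : α) (hadj : G.Adj g g') :
    ∀ h : Fin (k + 1), (g', h) ∈ D := by
  intro h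
  by_contra hmem
  have hub := (hD (g', h) hmem).2
  have hsub : (Set.range fun h' : Fin (k + 1) => ((g, h') : α × Fin (k + 1))) ⊆
      {u ∈ D | (lexProd G (⊥ : SimpleGraph (Fin (k + 1)))).Adj (g', h) u} := by
    rintro x ⟨h', rfl⟩
    exact ⟨hg h', Or.inl hadj.symm⟩
  have hinj : Function.Injective fun h' : Fin (k + 1) => ((g, h') : α × Fin (k + 1)) :=
    fun a b hab => by simpa using congrArg Prod.snd hab
  have hcard : (Set.range fun h' : Fin (k + 1) => ((g, h') : α × Fin (k + 1))).ncard
      = k + 1 := by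
    rw [← Nat.card_coe_set_eq, Nat.card_range_of_injective hinj]
    simp
  have := Set.ncard_le_ncard hsub (Set.toFinite _)
  omega
end

section
/- Let k ≥ 1, let G be a finite simple graph, let K̄_{k+1} be the edgeless graph on k+1 vertices, and suppose g₁ is a vertex of degree 1 in G with unique neighbor g₂. Then every [1,k]-dominating set D of the lexicographic product G ∘ K̄_{k+1} intersects the H-layer H^{g₂}, i.e., D ∩ {(g₂,h) : h ∈ V(K̄_{k+1})} ≠ ∅. -/
/-- If `g₁` is a vertex of degree 1 in `G` with unique neighbour `g₂`, then every
`[1,k]`-dominating set of `G ∘ K̄_(k+1)` meets the layer over `g₂`. -/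
theorem layer_meets_of_pendant
    {α : Type*} [Fintype α] (k : ℕ) (hk : 1 ≤ k) (G : SimpleGraph α)
    (D : Set (α × Fin (k + 1)))
    (hD : IsOneKDom (lexProd G (⊥ : SimpleGraph (Fin (k + 1)))) k D)
    (g₁ g₂ : α) (hadj : G.Adj g₁ g₂) (huniq : ∀ w : α, G.Adj g₁ w → w = g₂) :
    ∃ h : Fin (k + 1), (g₂, h) ∈ D := by
  by_contra hne
  push_neg at hne
  -- Every vertex of the layer over g₁ must be in D
  have hlayer1 : ∀ h : Fin (k + 1), (g₁, h) ∈ D := by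
    intro h
    by_contra hmem
    obtain ⟨h1, _⟩ := hD (g₁, h) hmem
    obtain ⟨u, huD, huadj⟩ :
        {u ∈ D | (lexProd G (⊥ : SimpleGraph (Fin (k + 1)))).Adj (g₁, h) u}.Nonempty := by
      apply Set.nonempty_of_ncard_ne_zero
      omega
    rcases huadj with h' | ⟨_, h'⟩
    · have : u.1 = g₂ := huniq u.1 h'
      have : u = (g₂, u.2) := by rw [← this]
      exact hne u.2 (this ▸ huD)
    · exact h'.elim
  -- Now (g₂, 0) ∉ D, so it has at most k neighbours in D, but all of layer g₁ works
  obtain ⟨_, hle⟩ := hD (g₂, 0) (hne 0)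
  have hsub : (fun h : Fin (k + 1) => ((g₁, h) : α × Fin (k + 1))) '' Set.univ ⊆
      {u ∈ D | (lexProd G (⊥ : SimpleGraph (Fin (k + 1)))).Adj (g₂, 0) u} := by
    rintro _ ⟨h, -, rfl⟩
    exact ⟨hlayer1 h, Or.inl hadj.symm⟩
  have hcard : ((fun h : Fin (k + 1) => ((g₁, h) : α × Fin (k + 1))) '' Set.univ).ncard
      = k + 1 := by
    rw [Set.ncard_image_of_injective _ (fun a b hab => (Prod.mk.injEq _ _ _ _).mp hab |>.2)]
    rw [Set.ncard_univ]; simp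
  have := Set.ncard_le_ncard hsub (Set.toFinite _)
  omega
end

section
/- Let t ≥ 0 be an integer. Let G₁ = S(2,2,2) be the star-like tree with central vertex v₇ of degree 3, support vertices v₂, v₄, v₆ adjacent to v₇, and leaves v₁, v₃, v₅ adjacent to v₂, v₄, v₆ respectively. Let Γ be the graph obtained from the lexicographic product G₁ ∘ K̄₃ by adding t new vertices a₁, …, a_t, each joined to all three vertices of the H-layer H^{v₂}. Then every [1,2]-dominating set S of Γ is equal to V(Γ); in particular γ_{[1,2]}(Γ) = 21 + t. -/
/-- The graph `Γ` of Theorem 3 (for `k = 2`): the lexicographic product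
`S(2,2,2) ∘ K̄₃` (on the `inl` vertices), together with `t` extra vertices
`a₁, …, a_t` (the `inr` vertices), each joined to the three vertices of the layer
over the support vertex `v₂ = some (0, 0)` of the spider `S(2,2,2)`. -/
def GammaGraph (t : ℕ) :
    SimpleGraph ((Option (Fin 3 × Fin 2) × Fin 3) ⊕ Fin t) :=
  SimpleGraph.fromRel (fun a b =>
    match a, b with
    | .inl u, .inl w => (lexProd (spider 3) (⊥ : SimpleGraph (Fin 3))).Adj u w
    | .inr _, .inl (some (i, j), _) => i = 0 ∧ j = 0
    | _, _ => False)

section Helpers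
variable {t : ℕ}

abbrev Vt (t : ℕ) := (Option (Fin 3 × Fin 2) × Fin 3) ⊕ Fin t

private lemma three_le_ncard {T : Set (Vt t)} {a b c : Vt t}
    (ha : a ∈ T) (hb : b ∈ T) (hc : c ∈ T)
    (hab : a ≠ b) (hac : a ≠ c) (hbc : b ≠ c) : 3 ≤ T.ncard := by
  have h3 : ({a, b, c} : Set (Vt t)).ncard = 3 :=
    Set.ncard_eq_three.2 ⟨a, b, c, hab, hac, hbc, rfl⟩
  calc 3 = ({a, b, c} : Set (Vt t)).ncard := h3.symm
    _ ≤ T.ncard := Set.ncard_le_ncard (by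
        intro u hu
        rcases hu with rfl | rfl | rfl <;> assumption) (Set.toFinite T)

private lemma adj_leaf (i x : Fin 3) (u : Vt t) :
    (GammaGraph t).Adj (.inl (some (i,1), x)) u ↔ ∃ y, u = .inl (some (i,0), y) := by
  rcases u with ⟨_ | ⟨j, k⟩, y⟩ | a
  · simp [GammaGraph, lexProd, spider, SimpleGraph.fromRel_adj]
  · fin_cases k <;>
      simp [GammaGraph, lexProd, spider, SimpleGraph.fromRel_adj, Prod.ext_iff]
  · constructor
    · intro h
      exfalso
      rw [GammaGraph, SimpleGraph.fromRel_adj] at h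
      simp at h
    · rintro ⟨y, hy⟩; exact absurd hy (by simp)

private lemma adj_supp_leaf (i y z : Fin 3) :
    (GammaGraph t).Adj (.inl (some (i,0), y)) (.inl (some (i,1), z)) := by
  simp [GammaGraph, lexProd, spider, SimpleGraph.fromRel_adj]

private lemma adj_supp_ctr (i y z : Fin 3) :
    (GammaGraph t).Adj (.inl (some (i,0), y)) (.inl (none, z)) := by
  simp [GammaGraph, lexProd, spider, SimpleGraph.fromRel_adj]

private lemma adj_ctr_supp (j z w : Fin 3) :
    (GammaGraph t).Adj (.inl (none, z)) (.inl (some (j,0), w)) := by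
  simp [GammaGraph, lexProd, spider, SimpleGraph.fromRel_adj]

private lemma adj_inr_supp0 (a : Fin t) (y : Fin 3) :
    (GammaGraph t).Adj (.inr a) (.inl (some (0,0), y)) := by
  simp [GammaGraph, lexProd, spider, SimpleGraph.fromRel_adj]

private lemma gamma_dom_univ (S : Set (Vt t)) (h : IsOneKDom (GammaGraph t) 2 S) :
    S = Set.univ := by
  -- step 1: all leaf copies belong to S
  have hleaf : ∀ i x : Fin 3, (Sum.inl (some (i,1), x) : Vt t) ∈ S := by
    intro i x
    by_contra hlx
    obtain ⟨-, hub⟩ := h _ hlx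
    -- some support copy over leg i is missing from S
    have hsupp : ∃ y : Fin 3, (Sum.inl (some (i,0), y) : Vt t) ∉ S := by
      by_contra hall
      push_neg at hall
      have h3 : 3 ≤ {u ∈ S | (GammaGraph t).Adj (.inl (some (i,1), x)) u}.ncard :=
        three_le_ncard (a := .inl (some (i,0), 0)) (b := .inl (some (i,0), 1))
          (c := .inl (some (i,0), 2))
          ⟨hall 0, (adj_leaf i x _).2 ⟨0, rfl⟩⟩ ⟨hall 1, (adj_leaf i x _).2 ⟨1, rfl⟩⟩
          ⟨hall 2, (adj_leaf i x _).2 ⟨2, rfl⟩⟩ (by simp) (by simp) (by simp)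
      exact absurd (le_trans h3 hub) (by norm_num)
    obtain ⟨y, hy⟩ := hsupp
    obtain ⟨-, hub2⟩ := h _ hy
    -- some center copy is missing from S
    have hctr : ∃ z : Fin 3, (Sum.inl (none, z) : Vt t) ∉ S := by
      by_contra hall
      push_neg at hall
      have h3 : 3 ≤ {u ∈ S | (GammaGraph t).Adj (.inl (some (i,0), y)) u}.ncard :=
        three_le_ncard (a := .inl (none, 0)) (b := .inl (none, 1)) (c := .inl (none, 2))
          ⟨hall 0, adj_supp_ctr i y 0⟩ ⟨hall 1, adj_supp_ctr i y 1⟩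
          ⟨hall 2, adj_supp_ctr i y 2⟩ (by simp) (by simp) (by simp)
      exact absurd (le_trans h3 hub2) (by norm_num)
    obtain ⟨z, hz⟩ := hctr
    obtain ⟨-, hub3⟩ := h _ hz
    -- some leg j has no support copy in S
    have hleg : ∃ j : Fin 3, ∀ w : Fin 3, (Sum.inl (some (j,0), w) : Vt t) ∉ S := by
      by_contra hall
      push_neg at hall
      obtain ⟨w0, hw0⟩ := hall 0
      obtain ⟨w1, hw1⟩ := hall 1
      obtain ⟨w2, hw2⟩ := hall 2
      have h3 : 3 ≤ {u ∈ S | (GammaGraph t).Adj (.inl (none, z)) u}.ncard :=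
        three_le_ncard
          ⟨hw0, adj_ctr_supp 0 z w0⟩ ⟨hw1, adj_ctr_supp 1 z w1⟩ ⟨hw2, adj_ctr_supp 2 z w2⟩
          (by simp [Prod.ext_iff]) (by simp [Prod.ext_iff]) (by simp [Prod.ext_iff])
      exact absurd (le_trans h3 hub3) (by norm_num)
    obtain ⟨j, hj⟩ := hleg
    -- every leaf copy over leg j is in S
    have hLj : ∀ x' : Fin 3, (Sum.inl (some (j,1), x') : Vt t) ∈ S := by
      intro x'
      by_contra hx'
      obtain ⟨hlb, -⟩ := h _ hx'
      have hne : {u ∈ S | (GammaGraph t).Adj (.inl (some (j,1), x')) u}.Nonempty :=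
        Set.nonempty_of_ncard_ne_zero (Nat.one_le_iff_ne_zero.mp hlb)
      obtain ⟨u, huS, huA⟩ := hne
      obtain ⟨w, rfl⟩ := (adj_leaf j x' u).1 huA
      exact hj w huS
    -- but then the support copy (j,0,0) ∉ S has three neighbours in S
    obtain ⟨-, hub4⟩ := h _ (hj 0)
    have h3 : 3 ≤ {u ∈ S | (GammaGraph t).Adj (.inl (some (j,0), 0)) u}.ncard :=
      three_le_ncard
        ⟨hLj 0, adj_supp_leaf j 0 0⟩ ⟨hLj 1, adj_supp_leaf j 0 1⟩ ⟨hLj 2, adj_supp_leaf j 0 2⟩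
        (by simp) (by simp) (by simp)
    exact absurd (le_trans h3 hub4) (by norm_num)
  -- step 2: all support copies belong to S
  have hsupp : ∀ i y : Fin 3, (Sum.inl (some (i,0), y) : Vt t) ∈ S := by
    intro i y
    by_contra hy
    obtain ⟨-, hub⟩ := h _ hy
    have h3 : 3 ≤ {u ∈ S | (GammaGraph t).Adj (.inl (some (i,0), y)) u}.ncard :=
      three_le_ncard
        ⟨hleaf i 0, adj_supp_leaf i y 0⟩ ⟨hleaf i 1, adj_supp_leaf i y 1⟩
        ⟨hleaf i 2, adj_supp_leaf i y 2⟩ (by simp) (by simp) (by simp)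
    exact absurd (le_trans h3 hub) (by norm_num)
  -- step 3: all centre copies belong to S
  have hctr : ∀ z : Fin 3, (Sum.inl (none, z) : Vt t) ∈ S := by
    intro z
    by_contra hz
    obtain ⟨-, hub⟩ := h _ hz
    have h3 : 3 ≤ {u ∈ S | (GammaGraph t).Adj (.inl (none, z)) u}.ncard :=
      three_le_ncard
        ⟨hsupp 0 0, adj_ctr_supp 0 z 0⟩ ⟨hsupp 0 1, adj_ctr_supp 0 z 1⟩
        ⟨hsupp 0 2, adj_ctr_supp 0 z 2⟩ (by simp) (by simp) (by simp)
    exact absurd (le_trans h3 hub) (by norm_num)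
  -- step 4: all extra vertices belong to S
  have hinr : ∀ a : Fin t, (Sum.inr a : Vt t) ∈ S := by
    intro a
    by_contra ha
    obtain ⟨-, hub⟩ := h _ ha
    have h3 : 3 ≤ {u ∈ S | (GammaGraph t).Adj (.inr a) u}.ncard :=
      three_le_ncard
        ⟨hsupp 0 0, adj_inr_supp0 a 0⟩ ⟨hsupp 0 1, adj_inr_supp0 a 1⟩
        ⟨hsupp 0 2, adj_inr_supp0 a 2⟩ (by simp) (by simp) (by simp)
    exact absurd (le_trans h3 hub) (by norm_num)
  ext u
  simp only [Set.mem_univ, iff_true]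
  rcases u with ⟨_ | ⟨i, k⟩, y⟩ | a
  · exact hctr y
  · fin_cases k
    · exact hsupp i y
    · exact hleaf i y
  · exact hinr a

end Helpers

/-- Every `[1,2]`-dominating set of `Γ` is the whole vertex set; in particular
`γ_[1,2](Γ) = 21 + t`. -/
theorem gammaGraph_oneKDom_eq_univ (t : ℕ) :
    (∀ S : Set ((Option (Fin 3 × Fin 2) × Fin 3) ⊕ Fin t),
      IsOneKDom (GammaGraph t) 2 S → S = Set.univ) ∧
    oneKDomNum (GammaGraph t) 2 = 21 + t := by
  refine ⟨gamma_dom_univ, ?_⟩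
  have hcard : (Set.univ : Set (Vt t)).ncard = 21 + t := by
    simp [Set.ncard_univ, Nat.card_eq_fintype_card]
  have hset : {m | ∃ D : Set (Vt t), IsOneKDom (GammaGraph t) 2 D ∧ D.ncard = m}
      = {21 + t} := by
    ext m
    simp only [Set.mem_setOf_eq, Set.mem_singleton_iff]
    constructor
    · rintro ⟨D, hD, rfl⟩
      rw [gamma_dom_univ D hD, hcard]
    · rintro rfl
      exact ⟨Set.univ, fun v hv => absurd (Set.mem_univ v) hv, hcard⟩
  rw [oneKDomNum, hset, csInf_singleton]
end
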